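/- arXiv:2005.14620 — 8 statements merged into one kernel-verified Lean document; each statement's English description precedes it below -/
import Mathlib

section
/- Let G be a finite strongly connected directed graph and let u and u' be two distinct vertices of G such that N⁺_G(u) ⊆ N⁺_G(u') and N⁻_G(u) ⊆ N⁻_G(u') (out- and in-neighborhoods). Then the induced subgraph G[V(G) \ {u}] is strongly connected. -/
/-- A directed graph (given by its arc relation) is strongly connected if every
vertex can reach every other vertex by a directed path. -/
def StronglyConnected {V : Type*} (A : V → V → Prop) : Prop :=
  ∀ u v : V, Relation.ReflTransGen A u v

/-- If `G` is a finite strongly connected digraph and `u ≠ u'` are vertices with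
`N⁺(u) ⊆ N⁺(u')` and `N⁻(u) ⊆ N⁻(u')`, then the induced subgraph on
`V(G) \ {u}` is strongly connected. -/
theorem removing_dominated_vertex_keeps_strong_connectivity
    {V : Type*} [Fintype V] [DecidableEq V] (A : V → V → Prop)
    (hG : StronglyConnected A) (u u' : V) (hne : u ≠ u')
    (hout : ∀ x, A u x → A u' x) (hin : ∀ x, A x u → A x u') :
    StronglyConnected (fun a b : {x : V // x ≠ u} => A a.1 b.1) := by
  set A' : {x : V // x ≠ u} → {x : V // x ≠ u} → Prop :=
    fun a b => A a.1 b.1 with hA'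
  -- map sending u to u'
  let f : V → {x : V // x ≠ u} := fun x =>
    if h : x = u then ⟨u', hne.symm⟩ else ⟨x, h⟩
  have key : ∀ x y : V, Relation.ReflTransGen A x y →
      Relation.ReflTransGen A' (f x) (f y) := by
    intro x y h
    induction h with
    | refl => exact Relation.ReflTransGen.refl
    | tail _ hbc ih =>
      rename_i b c _
      refine ih.tail ?_
      by_cases hb : b = u <;> by_cases hc : c = u <;>
        simp only [f, hb, hc, hA', dif_pos, dif_neg, not_false_iff]
      · rw [hb, hc] at hbc; exact hin u' (hout u hbc)
      · rw [hb] at hbc; exact hout c hbc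
      · rw [hc] at hbc; exact hin b hbc
      · exact hbc
  intro a b
  have := key a.1 b.1 (hG a.1 b.1)
  have ha : f a.1 = a := by simp [f, a.2]
  have hb : f b.1 = b := by simp [f, b.2]
  rwa [ha, hb] at this
end

section
/- Let I=(G,w) be a MinPAC instance with |V(G)| ≥ 2, let v ∈ V(G), and let δ_v := min_{vu ∈ A(G)} w(vu). Let w' be the weight function with w'(vu) = w(vu) − δ_v for every outgoing arc vu of v, and w'(e) = w(e) for every other arc e. Then opt((G,w)) = opt((G,w')) + δ_v. -/
open scoped Classical in
/-- The cost paid by a vertex `v` in the subgraph with arcs `B`: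
the maximum weight of an outgoing arc of `v` (0 if there is none). -/
noncomputable def vertexCost {V : Type*} [Fintype V] (B : V → V → Prop)
    (w : V → V → ℕ) (v : V) : ℕ :=
  Finset.univ.sup fun u => if B v u then w v u else 0

/-- The total cost of the subgraph with arcs `B`. -/
noncomputable def pacCost {V : Type*} [Fintype V] (B : V → V → Prop)
    (w : V → V → ℕ) : ℕ :=
  ∑ v, vertexCost B w v

/-- A solution of a MinPAC instance `(A, w)`: a strongly connected spanning
subgraph (given by its arc relation `B`). -/
def IsPACSolution {V : Type*} (A B : V → V → Prop) : Prop :=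
  (∀ x y, B x y → A x y) ∧ StronglyConnected B

/-- The optimal cost of a MinPAC instance. -/
noncomputable def pacOpt {V : Type*} [Fintype V] (A : V → V → Prop)
    (w : V → V → ℕ) : ℕ :=
  sInf { c | ∃ B : V → V → Prop, IsPACSolution A B ∧ pacCost B w = c }

/-- Let `(G, w)` be a MinPAC instance with at least two vertices, `v` a vertex, and
`δ_v = min_{vu ∈ A(G)} w(vu)`. Reducing the weight of every outgoing arc of `v` by
`δ_v` (and keeping all other weights) decreases the optimal cost by exactly `δ_v`. -/
theorem opt_eq_of_reducing_outgoing_weights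
    {V : Type*} [Fintype V] [DecidableEq V] (A : V → V → Prop) (w : V → V → ℕ)
    (hG : StronglyConnected A) (hcard : 2 ≤ Fintype.card V)
    (v : V) (δ : ℕ) (hδ : δ = sInf {c | ∃ u, A v u ∧ w v u = c}) :
    pacOpt A w = pacOpt A (fun x y => if x = v then w x y - δ else w x y) + δ := by
  classical
  have hδle : ∀ u, A v u → δ ≤ w v u := by
    intro u hu; rw [hδ]; exact Nat.sInf_le ⟨u, hu, rfl⟩
  set w' : V → V → ℕ := fun x y => if x = v then w x y - δ else w x y with hw'
  have hw'v : ∀ u, w' v u = w v u - δ := by intro u; simp [hw']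
  have hkey : ∀ B : V → V → Prop, IsPACSolution A B →
      pacCost B w = pacCost B w' + δ := by
    rintro B ⟨hBA, hBsc⟩
    have : Nonempty V := Fintype.card_pos_iff.mp (by omega)
    obtain ⟨u0, hu0⟩ : ∃ u, B v u := by
      obtain ⟨u, hu⟩ := Fintype.exists_ne_of_one_lt_card (by omega) v
      rcases (hBsc v u).cases_head with h | ⟨c, hc, _⟩
      · exact absurd h.symm hu
      · exact ⟨c, hc⟩
    have hδB : ∀ u, B v u → δ ≤ w v u := fun u hu => hδle u (hBA _ _ hu)
    have hv : vertexCost B w v = vertexCost B w' v + δ := by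
      unfold vertexCost
      apply le_antisymm
      · apply Finset.sup_le
        intro u _
        split_ifs with h
        · calc w v u = (w v u - δ) + δ := (Nat.sub_add_cancel (hδB u h)).symm
            _ ≤ (Finset.univ.sup fun u => if B v u then w' v u else 0) + δ := by
                gcongr
                rw [← hw'v u]
                exact (Finset.le_sup (f := fun u => if B v u then w' v u else 0)
                  (Finset.mem_univ u)).trans_eq' (by simp [h])
        · exact Nat.zero_le _
      · obtain ⟨u1, -, hu1⟩ := Finset.exists_mem_eq_sup Finset.univ
          Finset.univ_nonempty (fun u => if B v u then w' v u else 0)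
        rw [hu1]
        by_cases h : B v u1
        · simp only [if_pos h]
          rw [hw'v u1, Nat.sub_add_cancel (hδB u1 h)]
          exact (Finset.le_sup (f := fun u => if B v u then w v u else 0)
            (Finset.mem_univ u1)).trans_eq' (by simp [h])
        · simp only [if_neg h, zero_add]
          calc δ ≤ w v u0 := hδB u0 hu0
            _ = if B v u0 then w v u0 else 0 := by simp [hu0]
            _ ≤ _ := Finset.le_sup (f := fun u => if B v u then w v u else 0)
              (Finset.mem_univ u0)
    have hx : ∀ x, x ≠ v → vertexCost B w x = vertexCost B w' x := by
      intro x hxv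
      unfold vertexCost
      congr 1; funext u
      simp [hw', hxv]
    calc pacCost B w = ∑ x, (vertexCost B w' x + if x = v then δ else 0) := by
          unfold pacCost
          apply Finset.sum_congr rfl
          intro x _
          by_cases h : x = v
          · subst h; simpa using hv
          · simp [h, hx x h]
      _ = (∑ x, vertexCost B w' x) + ∑ x, (if x = v then δ else 0) :=
          Finset.sum_add_distrib
      _ = pacCost B w' + δ := by rw [Finset.sum_ite_eq' Finset.univ v fun _ => δ]; simp [pacCost]
  have hA : IsPACSolution A A := ⟨fun _ _ h => h, hG⟩
  have hSne : {c | ∃ B, IsPACSolution A B ∧ pacCost B w = c}.Nonempty := ⟨_, A, hA, rfl⟩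
  have hTne : {c | ∃ B, IsPACSolution A B ∧ pacCost B w' = c}.Nonempty := ⟨_, A, hA, rfl⟩
  apply le_antisymm
  · obtain ⟨B, hB, hc⟩ := Nat.sInf_mem hTne
    calc pacOpt A w ≤ pacCost B w := Nat.sInf_le ⟨B, hB, rfl⟩
      _ = pacCost B w' + δ := hkey B hB
      _ = pacOpt A w' + δ := by rw [hc]; rfl
  · obtain ⟨B, hB, hc⟩ := Nat.sInf_mem hSne
    calc pacOpt A w' + δ ≤ pacCost B w' + δ := by
          gcongr
          exact Nat.sInf_le ⟨B, hB, rfl⟩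
      _ = pacCost B w := (hkey B hB).symm
      _ = pacOpt A w := hc
end

section
/- Let I=(G,w) be a MinPAC instance and let v ∈ V(G) be a vertex of degree 1 in the underlying undirected graph of G, with unique neighbor u (so, by strong connectivity, uv ∈ A(G) and vu ∈ A(G)). Let I'=(G',w') be the instance where G' = G[V(G) \ {v}] and w'(uv') = max{0, w(uv') − w(uv)} for every arc uv' ∈ A(G'), while w'(e)=w(e) for all arcs e of G' not outgoing from u. Then G' is strongly connected and opt(I) = opt(I') + w(vu) + w(uv). -/

private lemma nat_max_sub (a b : ℕ) : max a b = b - a + a := by omega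

private lemma my_sup_sub {V : Type*} [Fintype V] (f : V → ℕ) (c : ℕ) :
    (Finset.univ.sup fun x => f x - c) = Finset.univ.sup f - c := by
  apply le_antisymm
  · exact Finset.sup_le fun x _ => Nat.sub_le_sub_right (Finset.le_sup (Finset.mem_univ x)) c
  · rw [Nat.sub_le_iff_le_add]
    refine Finset.sup_le fun x _ => ?_
    have h : f x - c ≤ Finset.univ.sup fun x => f x - c :=
      Finset.le_sup (f := fun x => f x - c) (Finset.mem_univ x)
    omega

private lemma sup_split {V : Type*} [Fintype V] [DecidableEq V] (v : V) (g : V → ℕ) :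
    Finset.univ.sup g
      = max (g v) ((Finset.univ : Finset {x : V // x ≠ v}).sup fun a => g a.1) := by
  apply le_antisymm
  · refine Finset.sup_le fun x _ => ?_
    by_cases h : x = v
    · subst h; exact le_max_left _ _
    · exact le_max_of_le_right
        (Finset.le_sup (f := fun a : {x : V // x ≠ v} => g a.1) (Finset.mem_univ ⟨x, h⟩))
  · exact max_le (Finset.le_sup (Finset.mem_univ v))
      (Finset.sup_le fun a _ => Finset.le_sup (Finset.mem_univ a.1))

private lemma sum_split {V : Type*} [Fintype V] [DecidableEq V] (v : V) (g : V → ℕ) :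
    ∑ x, g x = g v + ∑ a : {x : V // x ≠ v}, g a.1 := by
  rw [← Finset.add_sum_erase Finset.univ g (Finset.mem_univ v)]
  congr 1
  exact Finset.sum_subtype (Finset.univ.erase v) (fun x => by simp) g

private lemma reach_restrict {V : Type*} [DecidableEq V] (B : V → V → Prop) {v u : V}
    (hne : u ≠ v)
    (hin : ∀ x, x ≠ v → B x v → x = u) (hout : ∀ y, y ≠ v → B v y → y = u)
    {a b : V} (hb : b ≠ v) (h : Relation.ReflTransGen B a b) :
    Relation.ReflTransGen (fun p q : {x : V // x ≠ v} => B p.1 q.1)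
      (if h : a = v then ⟨u, hne⟩ else ⟨a, h⟩) ⟨b, hb⟩ := by
  induction h using Relation.ReflTransGen.head_induction_on with
  | refl => rw [dif_neg hb]
  | head h1 h2 ih =>
    rename_i x y
    by_cases hx : x = v
    · by_cases hy : y = v
      · rw [dif_pos hx]; rw [dif_pos hy] at ih; exact ih
      · have hyu : y = u := hout y hy (hx ▸ h1)
        rw [dif_pos hx]; rw [dif_neg hy] at ih
        subst hyu; exact ih
    · by_cases hy : y = v
      · have hxu : x = u := hin x hx (hy ▸ h1)
        rw [dif_neg hx]; rw [dif_pos hy] at ih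
        subst hxu; exact ih
      · rw [dif_neg hx]; rw [dif_neg hy] at ih
        exact Relation.ReflTransGen.head h1 ih

private lemma exists_into {V : Type*} (B : V → V → Prop) {x v : V}
    (h : Relation.ReflTransGen B x v) : x ≠ v → ∃ z, z ≠ v ∧ B z v := by
  induction h using Relation.ReflTransGen.head_induction_on with
  | refl => intro hx; exact absurd rfl hx
  | head h1 h2 ih =>
    rename_i p q
    intro hp
    by_cases hq : q = v
    · exact ⟨p, hp, hq ▸ h1⟩
    · exact ih hq

private lemma exists_out {V : Type*} (B : V → V → Prop) {v y : V}
    (h : Relation.ReflTransGen B v y) : y ≠ v → ∃ z, z ≠ v ∧ B v z := by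
  induction h with
  | refl => intro hy; exact absurd rfl hy
  | tail h1 h2 ih =>
    rename_i p q
    intro hq
    by_cases hp : p = v
    · exact ⟨q, hq, hp ▸ h2⟩
    · exact ih hp

private lemma sum_part {V : Type*} [Fintype V] [DecidableEq V] (B : V → V → Prop)
    (w : V → V → ℕ) {v u : V} (hne : u ≠ v)
    (hin : ∀ x, x ≠ v → B x v → x = u) (hBuv : B u v) :
    ∑ a : {x : V // x ≠ v}, vertexCost B w a.1
      = pacCost (fun a b : {x : V // x ≠ v} => B a.1 b.1)
          (fun a b => if a.1 = u then w u b.1 - w u v else w a.1 b.1) + w u v := by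
  classical
  have key : ∀ a : {x : V // x ≠ v}, vertexCost B w a.1
      = vertexCost (fun p q : {x : V // x ≠ v} => B p.1 q.1)
          (fun p q => if p.1 = u then w u q.1 - w u v else w p.1 q.1) a
        + (if a.1 = u then w u v else 0) := by
    intro a
    simp only [vertexCost]
    rw [sup_split v]
    by_cases ha : a.1 = u
    · rw [ha]
      simp only [eq_self_iff_true, if_true]
      rw [if_pos hBuv]
      have h2 : ((Finset.univ : Finset {x : V // x ≠ v}).sup fun b =>
            if B u b.1 then w u b.1 - w u v else 0)
          = ((Finset.univ : Finset {x : V // x ≠ v}).sup fun b =>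
              (if B u b.1 then w u b.1 else 0) - w u v) := by
        refine Finset.sup_congr rfl fun b _ => ?_
        by_cases hb : B u b.1
        · rw [if_pos hb, if_pos hb]
        · rw [if_neg hb, if_neg hb, Nat.zero_sub]
      rw [h2, my_sup_sub]
      exact nat_max_sub _ _
    · simp only [if_neg ha]
      have hz : (if B a.1 v then w a.1 v else 0) = 0 :=
        if_neg (fun h => ha (hin a.1 a.2 h))
      rw [hz, add_zero]
      exact max_eq_right (Nat.zero_le _)
  have hsum : ∑ a : {x : V // x ≠ v}, (if a.1 = u then w u v else 0) = w u v := by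
    have h1 : ∀ a : {x : V // x ≠ v},
        (if a.1 = u then w u v else 0) = (if a = ⟨u, hne⟩ then w u v else 0) := by
      intro a
      by_cases h : a = ⟨u, hne⟩
      · subst h; simp
      · rw [if_neg h, if_neg (fun hh => h (Subtype.ext hh))]
    rw [Finset.sum_congr rfl fun a _ => h1 a]
    simp
  rw [Finset.sum_congr rfl fun a _ => key a, Finset.sum_add_distrib, hsum]
  rfl

private lemma cost_eq {V : Type*} [Fintype V] [DecidableEq V] (B : V → V → Prop)
    (w : V → V → ℕ) {v u : V} (hne : u ≠ v)
    (hin : ∀ x, x ≠ v → B x v → x = u) (hout : ∀ y, B v y → y = u)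
    (hBuv : B u v) (hBvu : B v u) :
    pacCost B w = pacCost (fun a b : {x : V // x ≠ v} => B a.1 b.1)
        (fun a b => if a.1 = u then w u b.1 - w u v else w a.1 b.1) + w v u + w u v := by
  classical
  have hv : vertexCost B w v = w v u := by
    simp only [vertexCost]
    apply le_antisymm
    · refine Finset.sup_le fun y _ => ?_
      by_cases h : B v y
      · rw [if_pos h, hout y h]
      · rw [if_neg h]; exact Nat.zero_le _
    · have h := Finset.le_sup (f := fun y => if B v y then w v y else 0) (Finset.mem_univ u)
      rwa [if_pos hBvu] at h
  have hs := sum_part B w hne hin hBuv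
  simp only [pacCost] at hs ⊢
  rw [sum_split v (fun x => vertexCost B w x)]
  omega

private lemma cost_ge {V : Type*} [Fintype V] [DecidableEq V] (B : V → V → Prop)
    (w : V → V → ℕ) {v u : V} (hne : u ≠ v)
    (hin : ∀ x, x ≠ v → B x v → x = u) (hBuv : B u v) (hBvu : B v u) :
    pacCost (fun a b : {x : V // x ≠ v} => B a.1 b.1)
        (fun a b => if a.1 = u then w u b.1 - w u v else w a.1 b.1) + w v u + w u v
      ≤ pacCost B w := by
  classical
  have hv : w v u ≤ vertexCost B w v := by
    simp only [vertexCost]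
    have h := Finset.le_sup (f := fun y => if B v y then w v y else 0) (Finset.mem_univ u)
    rwa [if_pos hBvu] at h
  have hs := sum_part B w hne hin hBuv
  simp only [pacCost] at hs ⊢
  rw [sum_split v (fun x => vertexCost B w x)]
  omega

/-- Let `(G, w)` be a MinPAC instance and `v` a vertex of degree 1 in the underlying
undirected graph, with unique neighbor `u` (so, by strong connectivity,
`uv, vu ∈ A(G)`). Deleting `v` and replacing the weight of each arc `uv'` by
`max {0, w(uv') − w(uv)}` yields a strongly connected graph `G'` with
`opt(I) = opt(I') + w(vu) + w(uv)`. -/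
theorem opt_eq_of_removing_degree_one_vertex
    {V : Type*} [Fintype V] [DecidableEq V] (A : V → V → Prop) (w : V → V → ℕ)
    (hG : StronglyConnected A)
    (v u : V) (hne : u ≠ v)
    (hnbr : ∀ x, x ≠ v → (A v x ∨ A x v) → x = u)
    (huv : A u v) (hvu : A v u) :
    StronglyConnected (fun a b : {x : V // x ≠ v} => A a.1 b.1) ∧
    pacOpt A w =
      pacOpt (fun a b : {x : V // x ≠ v} => A a.1 b.1)
        (fun a b : {x : V // x ≠ v} => if a.1 = u then w u b.1 - w u v else w a.1 b.1)
      + w v u + w u v := by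
  classical
  have hinA : ∀ x, x ≠ v → A x v → x = u := fun x hx h => hnbr x hx (Or.inr h)
  have houtA : ∀ y, y ≠ v → A v y → y = u := fun y hy h => hnbr y hy (Or.inl h)
  set A' : {x : V // x ≠ v} → {x : V // x ≠ v} → Prop := fun a b => A a.1 b.1 with hA'
  set w' : {x : V // x ≠ v} → {x : V // x ≠ v} → ℕ :=
    fun a b => if a.1 = u then w u b.1 - w u v else w a.1 b.1 with hw'
  have hSC' : StronglyConnected A' := by
    intro a b
    have h := reach_restrict A hne hinA houtA b.2 (hG a.1 b.1)
    rw [dif_neg a.2] at h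
    exact h
  refine ⟨hSC', ?_⟩
  apply le_antisymm
  · have hne' : {c | ∃ B' : {x : V // x ≠ v} → {x : V // x ≠ v} → Prop,
        IsPACSolution A' B' ∧ pacCost B' w' = c}.Nonempty :=
      ⟨_, A', ⟨fun _ _ h => h, hSC'⟩, rfl⟩
    have hmem : ∃ B' : {x : V // x ≠ v} → {x : V // x ≠ v} → Prop,
        IsPACSolution A' B' ∧ pacCost B' w' = pacOpt A' w' := Nat.sInf_mem hne'
    obtain ⟨B', ⟨hB'A, hB'SC⟩, hB'c⟩ := hmem
    set Bex : V → V → Prop := fun x y =>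
      (∃ hx : x ≠ v, ∃ hy : y ≠ v, B' ⟨x, hx⟩ ⟨y, hy⟩) ∨ (x = v ∧ y = u) ∨ (x = u ∧ y = v)
      with hBex
    have hsol : IsPACSolution A Bex := by
      constructor
      · rintro x y (⟨hx, hy, h⟩ | ⟨rfl, rfl⟩ | ⟨rfl, rfl⟩)
        · exact hB'A _ _ h
        · exact hvu
        · exact huv
      · have hlift : ∀ a b : {x : V // x ≠ v}, Relation.ReflTransGen Bex a.1 b.1 := by
          intro a b
          refine Relation.ReflTransGen.lift Subtype.val ?_ a b (hB'SC a b)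
          intro p q h
          exact Or.inl ⟨p.2, q.2, h⟩
        intro x y
        by_cases hx : x = v <;> by_cases hy : y = v
        · subst hx; subst hy; exact Relation.ReflTransGen.refl
        · subst hx
          exact Relation.ReflTransGen.head (Or.inr (Or.inl ⟨rfl, rfl⟩)) (hlift ⟨u, hne⟩ ⟨y, hy⟩)
        · subst hy
          exact Relation.ReflTransGen.tail (hlift ⟨x, hx⟩ ⟨u, hne⟩) (Or.inr (Or.inr ⟨rfl, rfl⟩))
        · exact hlift ⟨x, hx⟩ ⟨y, hy⟩
    have hrestr : (fun a b : {x : V // x ≠ v} => Bex a.1 b.1) = B' := by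
      funext a b
      apply propext
      constructor
      · rintro (⟨hx, hy, h⟩ | ⟨h1, -⟩ | ⟨-, h2⟩)
        · exact h
        · exact absurd h1 a.2
        · exact absurd h2 b.2
      · intro h
        exact Or.inl ⟨a.2, b.2, h⟩
    have hc : pacCost Bex w = pacCost B' w' + w v u + w u v := by
      have h := cost_eq Bex w hne ?_ ?_ ?_ ?_
      · rw [hrestr, ← hw'] at h
        exact h
      · rintro x hx (⟨-, hy, -⟩ | ⟨rfl, -⟩ | ⟨h1, -⟩)
        · exact absurd rfl hy
        · exact absurd rfl hx
        · exact h1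
      · rintro y (⟨hx, -, -⟩ | ⟨-, h2⟩ | ⟨h1, -⟩)
        · exact absurd rfl hx
        · exact h2
        · exact absurd h1.symm hne
      · exact Or.inr (Or.inr ⟨rfl, rfl⟩)
      · exact Or.inr (Or.inl ⟨rfl, rfl⟩)
    have hle : pacOpt A w ≤ pacCost Bex w := Nat.sInf_le ⟨Bex, hsol, rfl⟩
    rw [hc, hB'c] at hle
    exact hle
  · have hne2 : {c | ∃ B : V → V → Prop, IsPACSolution A B ∧ pacCost B w = c}.Nonempty :=
      ⟨_, A, ⟨fun _ _ h => h, hG⟩, rfl⟩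
    have hmem2 : ∃ B : V → V → Prop, IsPACSolution A B ∧ pacCost B w = pacOpt A w :=
      Nat.sInf_mem hne2
    obtain ⟨B, ⟨hBA, hBSC⟩, hBc⟩ := hmem2
    have hinB : ∀ x, x ≠ v → B x v → x = u := fun x hx h => hinA x hx (hBA _ _ h)
    have houtB : ∀ y, y ≠ v → B v y → y = u := fun y hy h => houtA y hy (hBA _ _ h)
    have hBuv : B u v := by
      obtain ⟨z, hz, h⟩ := exists_into B (hBSC u v) hne
      exact hinB z hz h ▸ h
    have hBvu : B v u := by
      obtain ⟨z, hz, h⟩ := exists_out B (hBSC v u) hne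
      exact houtB z hz h ▸ h
    have hBsol' : IsPACSolution A' (fun a b : {x : V // x ≠ v} => B a.1 b.1) := by
      refine ⟨fun a b h => hBA _ _ h, ?_⟩
      intro a b
      have h := reach_restrict B hne hinB houtB b.2 (hBSC a.1 b.1)
      rw [dif_neg a.2] at h
      exact h
    have h1 : pacOpt A' w' ≤ pacCost (fun a b : {x : V // x ≠ v} => B a.1 b.1) w' :=
      Nat.sInf_le ⟨_, hBsol', rfl⟩
    have h2 := cost_ge B w hne hinB hBuv hBvu
    rw [← hw'] at h2
    rw [← hBc]
    omega
end

section
/- Let G be a finite strongly connected directed graph, let H be a strongly connected spanning subgraph of G, and let P = (v_0, v_1, …, v_h, v_{h+1}) with h ≥ 2 be a maximal induced path of G. Then at least one of the following four cases holds: (R) v_i v_{i+1} ∈ A(H) for every i ∈ [h−1], and v_{k+1} v_k ∉ A(H) for some k ∈ [h−1]; (L) v_{i+1} v_i ∈ A(H) for every i ∈ [h−1], and v_k v_{k+1} ∉ A(H) for some k ∈ [h−1]; (B) v_i v_{i+1} ∈ A(H) and v_{i+1} v_i ∈ A(H) for every i ∈ [h−1]; (N) there exists k ∈ [h−1] with v_k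 v_{k+1} ∉ A(H) and v_{k+1} v_k ∉ A(H), and for every i ∈ [h−1] with i ≠ k both v_i v_{i+1} ∈ A(H) and v_{i+1} v_i ∈ A(H). -/
open scoped Classical in
/-- The degree of a vertex in the underlying undirected graph of the digraph with
arc relation `A`. -/
noncomputable def underlyingDegree {V : Type*} [Fintype V] (A : V → V → Prop)
    (x : V) : ℕ :=
  (Finset.univ.filter fun y => y ≠ x ∧ (A x y ∨ A y x)).card

/-- If a `B`-walk goes from inside `S` to outside `S`, some arc crosses. -/
lemma crossing_lemma {V : Type*} {B : V → V → Prop} {S : V → Prop} {u v : V}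
    (hw : Relation.ReflTransGen B u v) (hu : S u) (hv : ¬ S v) :
    ∃ x y, S x ∧ ¬ S y ∧ B x y := by
  classical
  revert hv
  induction hw with
  | refl => exact fun hv => absurd hu hv
  | @tail b c hab hbc ih =>
    intro hv
    by_cases hb : S b
    · exact ⟨b, c, hb, hv, hbc⟩
    · exact ih hb

/-- The neighbors (in the underlying graph of `A`) of an inner vertex of the
path are exactly its path neighbors. -/
lemma nbr_lemma {V : Type*} [Fintype V] (A : V → V → Prop)
    (h : ℕ) (p : ℕ → V)
    (hinj : ∀ i j, i ≤ h + 1 → j ≤ h + 1 → p i = p j → i = j)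
    (hpath : ∀ i ≤ h, A (p i) (p (i + 1)) ∨ A (p (i + 1)) (p i))
    (hdin : ∀ i, 1 ≤ i → i ≤ h → underlyingDegree A (p i) = 2)
    (i : ℕ) (hi1 : 1 ≤ i) (hi2 : i ≤ h) (y : V)
    (hy : A (p i) y ∨ A y (p i)) :
    y = p i ∨ y = p (i - 1) ∨ y = p (i + 1) := by
  classical
  by_cases hyi : y = p i
  · exact Or.inl hyi
  right
  have hii : i - 1 + 1 = i := by omega
  have hne : p (i - 1) ≠ p (i + 1) := by
    intro hpe
    have := hinj (i - 1) (i + 1) (by omega) (by omega) hpe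
    omega
  have hm1 : p (i - 1) ≠ p i := by
    intro hpe
    have := hinj (i - 1) i (by omega) (by omega) hpe
    omega
  have hp1 : p (i + 1) ≠ p i := by
    intro hpe
    have := hinj (i + 1) i (by omega) (by omega) hpe
    omega
  have e1 : A (p i) (p (i - 1)) ∨ A (p (i - 1)) (p i) := by
    have := hpath (i - 1) (by omega)
    rw [hii] at this
    exact this.symm
  have e2 : A (p i) (p (i + 1)) ∨ A (p (i + 1)) (p i) := hpath i hi2
  have hsub : ({p (i - 1), p (i + 1)} : Finset V) ⊆
      Finset.univ.filter fun z => z ≠ p i ∧ (A (p i) z ∨ A z (p i)) := by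
    intro z hz
    simp only [Finset.mem_insert, Finset.mem_singleton] at hz
    rcases hz with rfl | rfl
    · simp only [Finset.mem_filter, Finset.mem_univ, true_and]
      exact ⟨hm1, e1⟩
    · simp only [Finset.mem_filter, Finset.mem_univ, true_and]
      exact ⟨hp1, e2⟩
  have hcard2 : ({p (i - 1), p (i + 1)} : Finset V).card = 2 := by
    rw [Finset.card_insert_of_notMem (by simpa using hne), Finset.card_singleton]
  have hdeg : (Finset.univ.filter
      fun z => z ≠ p i ∧ (A (p i) z ∨ A z (p i))).card = 2 := by
    have := hdin i hi1 hi2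
    unfold underlyingDegree at this
    convert this using 2
  have heq : ({p (i - 1), p (i + 1)} : Finset V) =
      Finset.univ.filter fun z => z ≠ p i ∧ (A (p i) z ∨ A z (p i)) :=
    Finset.eq_of_subset_of_card_le hsub (by rw [hdeg, hcard2])
  have hymem : y ∈ Finset.univ.filter
      fun z => z ≠ p i ∧ (A (p i) z ∨ A z (p i)) := by
    simp only [Finset.mem_filter, Finset.mem_univ, true_and]
    exact ⟨hyi, hy⟩
  rw [← heq] at hymem
  simpa using hymem

/-- Key lemma: a missing forward arc at `k` forces all backward arcs away
from `k`. -/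
lemma gap_lemma {V : Type*} (B : V → V → Prop)
    (hB : StronglyConnected B)
    (h : ℕ) (hh : 2 ≤ h) (p : ℕ → V)
    (hinj : ∀ i j, i ≤ h + 1 → j ≤ h + 1 → p i = p j → i = j)
    (hnbr : ∀ i y, 1 ≤ i → i ≤ h → (B (p i) y ∨ B y (p i)) →
      y = p i ∨ y = p (i - 1) ∨ y = p (i + 1))
    (k j : ℕ) (hk1 : 1 ≤ k) (hk2 : k ≤ h - 1) (hj1 : 1 ≤ j) (hj2 : j ≤ h - 1)
    (hjk : j ≠ k) (hf : ¬ B (p k) (p (k + 1))) :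
    B (p (j + 1)) (p j) := by
  classical
  rcases lt_or_gt_of_ne hjk with hlt | hgt
  · -- j < k : a walk from p k to p j must cross out of { p i : j+1 ≤ i ≤ k }
    set S : V → Prop := fun x => ∃ i, j + 1 ≤ i ∧ i ≤ k ∧ x = p i with hS
    have hu : S (p k) := ⟨k, by omega, le_rfl, rfl⟩
    have hv : ¬ S (p j) := by
      rintro ⟨i, hi1, hi2, he⟩
      have := hinj j i (by omega) (by omega) he
      omega
    obtain ⟨x, y, ⟨i, hi1, hi2, rfl⟩, hy, hxy⟩ := crossing_lemma (hB (p k) (p j)) hu hv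
    rcases hnbr i y (by omega) (by omega) (Or.inl hxy) with h1 | h1 | h1
    · exact absurd ⟨i, hi1, hi2, h1⟩ hy
    · by_cases hij : i = j + 1
      · have : i - 1 = j := by omega
        rw [h1, this] at hxy
        rw [hij] at hxy
        exact hxy
      · exact absurd ⟨i - 1, by omega, by omega, h1⟩ hy
    · by_cases hik : i = k
      · rw [hik] at hxy
        rw [h1, hik] at hxy
        exact absurd hxy hf
      · exact absurd ⟨i + 1, by omega, by omega, h1⟩ hy
  · -- j > k : a walk from p (h+1) to p (k+1) must cross into { p i : k+1 ≤ i ≤ j }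
    set S : V → Prop := fun x => ∃ i, k + 1 ≤ i ∧ i ≤ j ∧ x = p i with hS
    have hu : ¬ S (p (h + 1)) := by
      rintro ⟨i, hi1, hi2, he⟩
      have := hinj (h + 1) i (by omega) (by omega) he
      omega
    have hv : S (p (k + 1)) := ⟨k + 1, le_rfl, by omega, rfl⟩
    obtain ⟨x, y, hx, hy, hxy⟩ :=
      crossing_lemma (S := fun x => ¬ S x) (hB (p (h + 1)) (p (k + 1))) hu
        (not_not_intro hv)
    obtain ⟨i, hi1, hi2, rfl⟩ := not_not.mp hy
    rcases hnbr i x (by omega) (by omega) (Or.inr hxy) with h1 | h1 | h1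
    · exact absurd ⟨i, hi1, hi2, h1⟩ hx
    · by_cases hik : i = k + 1
      · have : i - 1 = k := by omega
        rw [h1, this, hik] at hxy
        exact absurd hxy hf
      · exact absurd ⟨i - 1, by omega, by omega, h1⟩ hx
    · by_cases hij : i = j
      · rw [h1, hij] at hxy
        exact hxy
      · exact absurd ⟨i + 1, by omega, by omega, h1⟩ hx

/-- Let `G` be a finite strongly connected digraph, `H` a strongly connected
spanning subgraph of `G`, and `P = (v_0, …, v_{h+1})`, `h ≥ 2`, a maximal induced
path of `G`. Then the connection of `v_1` and `v_h` inside `P` in `H` falls into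
one of the four cases (R), (L), (B), (N). -/
theorem maximal_induced_path_four_cases
    {V : Type*} [Fintype V] (A B : V → V → Prop)
    (hG : StronglyConnected A)
    (hBA : ∀ x y, B x y → A x y) (hB : StronglyConnected B)
    (h : ℕ) (hh : 2 ≤ h) (p : ℕ → V)
    (hinj : ∀ i j, i ≤ h + 1 → j ≤ h + 1 → p i = p j → i = j)
    (hpath : ∀ i ≤ h, A (p i) (p (i + 1)) ∨ A (p (i + 1)) (p i))
    (hd0 : 3 ≤ underlyingDegree A (p 0))
    (hdlast : 3 ≤ underlyingDegree A (p (h + 1)))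
    (hdin : ∀ i, 1 ≤ i → i ≤ h → underlyingDegree A (p i) = 2) :
    -- Case (R)
    ((∀ i, 1 ≤ i → i ≤ h - 1 → B (p i) (p (i + 1))) ∧
      ∃ k, 1 ≤ k ∧ k ≤ h - 1 ∧ ¬ B (p (k + 1)) (p k)) ∨
    -- Case (L)
    ((∀ i, 1 ≤ i → i ≤ h - 1 → B (p (i + 1)) (p i)) ∧
      ∃ k, 1 ≤ k ∧ k ≤ h - 1 ∧ ¬ B (p k) (p (k + 1))) ∨
    -- Case (B)
    (∀ i, 1 ≤ i → i ≤ h - 1 → B (p i) (p (i + 1)) ∧ B (p (i + 1)) (p i)) ∨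
    -- Case (N)
    (∃ k, 1 ≤ k ∧ k ≤ h - 1 ∧ ¬ B (p k) (p (k + 1)) ∧ ¬ B (p (k + 1)) (p k) ∧
      ∀ i, 1 ≤ i → i ≤ h - 1 → i ≠ k → B (p i) (p (i + 1)) ∧ B (p (i + 1)) (p i)) := by
  classical
  have hnbrB : ∀ i y, 1 ≤ i → i ≤ h → (B (p i) y ∨ B y (p i)) →
      y = p i ∨ y = p (i - 1) ∨ y = p (i + 1) := fun i y h1 h2 hy =>
    nbr_lemma A h p hinj hpath hdin i h1 h2 y (hy.imp (hBA _ _) (hBA _ _))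
  have hB' : StronglyConnected (fun x y => B y x) := fun u v =>
    Relation.reflTransGen_swap.mpr (hB v u)
  have hnbrB' : ∀ i y, 1 ≤ i → i ≤ h →
      ((fun x y => B y x) (p i) y ∨ (fun x y => B y x) y (p i)) →
      y = p i ∨ y = p (i - 1) ∨ y = p (i + 1) := fun i y h1 h2 hy =>
    hnbrB i y h1 h2 hy.symm
  have gapR : ∀ k j, 1 ≤ k → k ≤ h - 1 → 1 ≤ j → j ≤ h - 1 → j ≠ k →
      ¬ B (p k) (p (k + 1)) → B (p (j + 1)) (p j) := fun k j a b c d e f =>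
    gap_lemma B hB h hh p hinj hnbrB k j a b c d e f
  have gapL : ∀ k j, 1 ≤ k → k ≤ h - 1 → 1 ≤ j → j ≤ h - 1 → j ≠ k →
      ¬ B (p (k + 1)) (p k) → B (p j) (p (j + 1)) := fun k j a b c d e f =>
    gap_lemma (fun x y => B y x) hB' h hh p hinj hnbrB' k j a b c d e f
  by_cases hN : ∃ k, 1 ≤ k ∧ k ≤ h - 1 ∧ ¬ B (p k) (p (k + 1)) ∧
      ¬ B (p (k + 1)) (p k)
  · obtain ⟨k, hk1, hk2, hfk, hbk⟩ := hN
    refine Or.inr (Or.inr (Or.inr ⟨k, hk1, hk2, hfk, hbk, fun i h1 h2 hik => ?_⟩))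
    exact ⟨gapL k i hk1 hk2 h1 h2 hik hbk, gapR k i hk1 hk2 h1 h2 hik hfk⟩
  · push_neg at hN
    by_cases hf : ∀ i, 1 ≤ i → i ≤ h - 1 → B (p i) (p (i + 1))
    · by_cases hb : ∀ i, 1 ≤ i → i ≤ h - 1 → B (p (i + 1)) (p i)
      · exact Or.inr (Or.inr (Or.inl fun i h1 h2 => ⟨hf i h1 h2, hb i h1 h2⟩))
      · push_neg at hb
        obtain ⟨k, hk1, hk2, hbk⟩ := hb
        exact Or.inl ⟨hf, k, hk1, hk2, hbk⟩
    · push_neg at hf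
      obtain ⟨k, hk1, hk2, hfk⟩ := hf
      refine Or.inr (Or.inl ⟨fun j h1 h2 => ?_, k, hk1, hk2, hfk⟩)
      by_cases hjk : j = k
      · subst hjk
        exact hN j h1 h2 hfk
      · exact gapR k j hk1 hk2 h1 h2 hjk hfk
end

section
/- Let P = (v_0, …, v_{h+1}) be a maximal induced path of a digraph G with extended arc weights w̄ : V×V → ℕ∪{∞} (w̄(xy) = w(xy) if xy ∈ A(G), else ∞), and let C_R, C_L, C_N and the path-gadget weights w(a_1 b_2), w(a_2 b_1) be defined as in the gadget construction. Then w(a_1 b_2) ≤ C_R, w(a_2 b_1) ≤ C_L, and w(a_1 b_2) + w(a_2 b_1) ≥ C_N. -/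
open scoped Classical in
/-- Let `P = (v_0, …, v_{h+1})` be a maximal induced path of a digraph `G` with
extended arc weights `w̄` (`w̄(xy) = w(xy)` if `xy ∈ A(G)`, else `∞`), and let
`C_R`, `C_L`, `C_N` (with `k` a maximizer of `w̄(v_i v_{i+1}) + w̄(v_{i+1} v_i)`
over `i ∈ [h−1]`) and the path-gadget weights `w(a_1 b_2)`, `w(a_2 b_1)` be defined
as in the gadget construction. Then `w(a_1 b_2) ≤ C_R`, `w(a_2 b_1) ≤ C_L`, and
`w(a_1 b_2) + w(a_2 b_1) ≥ C_N`. -/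
theorem path_gadget_weight_bounds
    {V : Type*} [Fintype V] (A : V → V → Prop) (w : V → V → ℕ)
    (h : ℕ) (hh : 2 ≤ h) (p : ℕ → V)
    (hinj : ∀ i j, i ≤ h + 1 → j ≤ h + 1 → p i = p j → i = j)
    (hpath : ∀ i ≤ h, A (p i) (p (i + 1)) ∨ A (p (i + 1)) (p i))
    (hd0 : 3 ≤ underlyingDegree A (p 0))
    (hdlast : 3 ≤ underlyingDegree A (p (h + 1)))
    (hdin : ∀ i, 1 ≤ i → i ≤ h → underlyingDegree A (p i) = 2)
    (wbar : V → V → ℕ∞)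
    (hwbar : ∀ x y, wbar x y = if A x y then (w x y : ℕ∞) else ⊤)
    (k : ℕ) (hk1 : 1 ≤ k) (hk2 : k ≤ h - 1)
    (hkmax : ∀ i, 1 ≤ i → i ≤ h - 1 →
      wbar (p i) (p (i + 1)) + wbar (p (i + 1)) (p i) ≤
        wbar (p k) (p (k + 1)) + wbar (p (k + 1)) (p k))
    (CR CL CN : ℕ∞)
    (hCR : CR = ∑ i ∈ Finset.Icc 1 (h - 1), wbar (p i) (p (i + 1)))
    (hCL : CL = ∑ i ∈ Finset.Icc 1 (h - 1), wbar (p (i + 1)) (p i))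
    (hCN : CN = ∑ i ∈ (Finset.Icc 1 (h - 1)).erase k,
      (wbar (p i) (p (i + 1)) + wbar (p (i + 1)) (p i)))
    (w12 w21 : ℕ∞)
    (hw12 : w12 = if CR ≤ CN ∨ CL ≤ CN then CR else (((CN.toNat + 1) / 2 : ℕ) : ℕ∞))
    (hw21 : w21 = if CR ≤ CN ∨ CL ≤ CN then CL else ((CN.toNat / 2 : ℕ) : ℕ∞)) :
    w12 ≤ CR ∧ w21 ≤ CL ∧ CN ≤ w12 + w21 := by
  by_cases hc : CR ≤ CN ∨ CL ≤ CN
  · rw [hw12, hw21, if_pos hc, if_pos hc]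
    refine ⟨le_refl _, le_refl _, ?_⟩
    rw [hCN, hCR, hCL, ← Finset.sum_add_distrib]
    exact Finset.sum_le_sum_of_subset (Finset.erase_subset _ _)
  · push_neg at hc
    obtain ⟨h1, h2⟩ := hc
    have hfin : CN ≠ ⊤ := fun ht => (not_top_lt (ht ▸ h1)).elim
    have hCNn : CN = ((CN.toNat : ℕ) : ℕ∞) := (ENat.coe_toNat hfin).symm
    have hneg : ¬(CR ≤ CN ∨ CL ≤ CN) := by push_neg; exact ⟨h1, h2⟩
    rw [hw12, hw21, if_neg hneg, if_neg hneg]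
    have e1 : (CN.toNat + 1) / 2 ≤ CN.toNat := by omega
    have e2 : CN.toNat / 2 ≤ CN.toNat := by omega
    have e3 : (CN.toNat + 1) / 2 + CN.toNat / 2 = CN.toNat := by omega
    refine ⟨le_trans (Nat.cast_le.mpr e1) (hCNn ▸ h1.le),
      le_trans (Nat.cast_le.mpr e2) (hCNn ▸ h2.le), ?_⟩
    rw [← Nat.cast_add, e3, ← hCNn]
end

section
/- Let G be a finite undirected graph in which every vertex has degree at least 2, and let g be the feedback edge number of G. Then G contains at most 2g − 2 vertices of degree at least 3. -/
/-- Let `G` be a finite undirected graph in which every vertex has degree at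
least 2, and let `g` be its feedback edge number (characterized by
`g = |E(G)| − |V(G)| + c` with `c` the number of connected components, stated here
in subtraction-free form). Then `G` contains at most `2g − 2` vertices of degree
at least 3. -/
theorem few_high_degree_vertices_of_feedback_edge_number
    {V : Type*} [Fintype V] [DecidableEq V]
    (G : SimpleGraph V) [DecidableRel G.Adj]
    (hdeg : ∀ v : V, 2 ≤ G.degree v)
    (g : ℕ)
    (hg : g + Fintype.card V = G.edgeFinset.card + Nat.card G.ConnectedComponent) :
    (Finset.univ.filter fun v : V => 3 ≤ G.degree v).card ≤ 2 * g - 2 := by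
  classical
  rcases isEmpty_or_nonempty V with hV | hV
  · simp
  · set S := Finset.univ.filter fun v : V => 3 ≤ G.degree v with hS
    have hsum : ∑ v : V, G.degree v = 2 * G.edgeFinset.card :=
      G.sum_degrees_eq_twice_card_edges
    have hlb : 2 * Fintype.card V + S.card ≤ ∑ v : V, G.degree v := by
      have : ∑ v : V, G.degree v = ∑ v ∈ S, G.degree v + ∑ v ∈ Sᶜ, G.degree v :=
        (Finset.sum_add_sum_compl S _).symm
      rw [this]
      have h1 : 3 * S.card ≤ ∑ v ∈ S, G.degree v := by
        rw [mul_comm]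
        refine Finset.card_nsmul_le_sum S _ 3 ?_
        intro v hv
        exact (Finset.mem_filter.mp hv).2
      have h2 : 2 * Sᶜ.card ≤ ∑ v ∈ Sᶜ, G.degree v := by
        rw [mul_comm]
        exact Finset.card_nsmul_le_sum Sᶜ _ 2 fun v _ => hdeg v
      have hcard : S.card + Sᶜ.card = Fintype.card V := Finset.card_add_card_compl S
      omega
    have hc : 1 ≤ Nat.card G.ConnectedComponent := Nat.one_le_iff_ne_zero.mpr
      (Nat.card_ne_zero.mpr ⟨⟨G.connectedComponentMk (Classical.arbitrary V)⟩, inferInstance⟩)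
    omega
end

section
/- Let G be a finite connected undirected graph in which every vertex has degree at least 2, and let g ≥ 2 be the feedback edge number of G. Then G contains at most 3g − 3 maximal induced paths, where an edge between two vertices of degree at least 3 counts as a maximal induced path with no inner vertex. -/
/-- `IsMaxIndPath G a b l` states that `(a, l_1, …, l_h, b)` is a maximal induced
path of the undirected graph `G`: a path in `G` whose endpoints `a`, `b` have
degree at least 3 and whose inner vertices (the entries of `l`) have degree
exactly 2. -/
def IsMaxIndPath {V : Type*} [Fintype V] (G : SimpleGraph V) [DecidableRel G.Adj]
    (a b : V) (l : List V) : Prop :=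
  (a :: (l ++ [b])).Chain' G.Adj ∧ (a :: (l ++ [b])).Nodup ∧
    3 ≤ G.degree a ∧ 3 ≤ G.degree b ∧ ∀ v ∈ l, G.degree v = 2

section Aux

variable {V : Type*} [Fintype V] [DecidableEq V] (G : SimpleGraph V) [DecidableRel G.Adj]

set_option linter.unusedSectionVars false in
lemma isMaxIndPath_reverse {a b : V} {l : List V} (h : IsMaxIndPath G a b l) :
    IsMaxIndPath G b a l.reverse := by
  obtain ⟨hc, hn, ha, hb, hl⟩ := h
  have hrev : (b :: (l.reverse ++ [a])) = (a :: (l ++ [b])).reverse := by simp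
  refine ⟨?_, ?_, hb, ha, fun v hv => hl v (by simpa using hv)⟩
  · rw [hrev, List.Chain', List.isChain_reverse]
    exact List.IsChain.imp (fun x y hxy => hxy.symm) hc
  · rw [hrev, List.nodup_reverse]
    exact hn

/-- A list of the form `a :: (l ++ [b])` where inner vertices have degree 2 and `b`
has degree at least 3 is uniquely determined by `a` and the first entry of `l ++ [b]`. -/
lemma maxIndPath_uniq : ∀ (l l' : List V) (a b b' : V),
    (a :: (l ++ [b])).Chain' G.Adj → (a :: (l ++ [b])).Nodup →
    (a :: (l' ++ [b'])).Chain' G.Adj → (a :: (l' ++ [b'])).Nodup →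
    3 ≤ G.degree b → 3 ≤ G.degree b' →
    (∀ v ∈ l, G.degree v = 2) → (∀ v ∈ l', G.degree v = 2) →
    (l ++ [b]).head? = (l' ++ [b']).head? →
    b = b' ∧ l = l' := by
  intro l
  induction l with
  | nil =>
    intro l' a b b' _ _ _ _ hb hb' _ hl' hhead
    cases l' with
    | nil =>
      simp only [List.nil_append, List.head?_cons, Option.some.injEq] at hhead
      exact ⟨hhead, rfl⟩
    | cons x t' =>
      exfalso
      simp only [List.nil_append, List.cons_append, List.head?_cons,
        Option.some.injEq] at hhead
      have hx2 : G.degree x = 2 := hl' x List.mem_cons_self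
      rw [← hhead] at hx2
      omega
  | cons x t ih =>
    intro l' a b b' hc hn hc' hn' hb hb' hl hl' hhead
    cases l' with
    | nil =>
      exfalso
      simp only [List.nil_append, List.cons_append, List.head?_cons,
        Option.some.injEq] at hhead
      have hx2 : G.degree x = 2 := hl x List.mem_cons_self
      rw [hhead] at hx2
      omega
    | cons x' t' =>
      simp only [List.cons_append, List.head?_cons, Option.some.injEq] at hhead
      subst hhead
      -- destructure the continuations
      obtain ⟨c, r, hcr⟩ : ∃ c r, t ++ [b] = c :: r := by
        cases t with
        | nil => exact ⟨b, [], rfl⟩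
        | cons y s => exact ⟨y, s ++ [b], rfl⟩
      obtain ⟨c', r', hcr'⟩ : ∃ c r, t' ++ [b'] = c :: r := by
        cases t' with
        | nil => exact ⟨b', [], rfl⟩
        | cons y s => exact ⟨y, s ++ [b'], rfl⟩
      simp only [List.cons_append, hcr, hcr'] at hc hn hc' hn'
      -- adjacency facts
      have hax : G.Adj a x := hc.rel_head
      have hxc : G.Adj x c := hc.tail.rel_head
      have hxc' : G.Adj x c' := hc'.tail.rel_head
      -- nodup facts
      have hanotin : a ∉ x :: c :: r := by
        have := hn
        rw [List.nodup_cons] at this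
        exact this.1
      have hanotin' : a ∉ x :: c' :: r' := by
        have := hn'
        rw [List.nodup_cons] at this
        exact this.1
      have hac : a ≠ c := fun h => hanotin (by simp [h])
      have hac' : a ≠ c' := fun h => hanotin' (by simp [h])
      -- x has degree 2, so c = c'
      have hx2 : G.degree x = 2 := hl x List.mem_cons_self
      have hcc' : c = c' := by
        by_contra hne
        have hsub : ({a, c, c'} : Finset V) ⊆ G.neighborFinset x := by
          intro y hy
          simp only [Finset.mem_insert, Finset.mem_singleton] at hy
          rw [SimpleGraph.mem_neighborFinset]
          rcases hy with rfl | rfl | rfl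
          · exact hax.symm
          · exact hxc
          · exact hxc'
        have hcard3 : ({a, c, c'} : Finset V).card = 3 := by
          rw [Finset.card_insert_of_notMem (by simp [hac, hac']),
            Finset.card_insert_of_notMem (by simp [hne]), Finset.card_singleton]
        have hle := Finset.card_le_card hsub
        rw [hcard3] at hle
        have : (G.neighborFinset x).card = G.degree x := rfl
        omega
      subst hcc'
      -- apply the induction hypothesis with start vertex x
      have key := ih t' x b b'
        (by rw [hcr]; exact hc.tail)
        (by rw [hcr]; exact (List.nodup_cons.mp hn).2)
        (by rw [hcr']; exact hc'.tail)
        (by rw [hcr']; exact (List.nodup_cons.mp hn').2)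
        hb hb'
        (fun v hv => hl v (List.mem_cons_of_mem _ hv))
        (fun v hv => hl' v (List.mem_cons_of_mem _ hv))
        (by rw [hcr, hcr']; simp)
      exact ⟨key.1, by rw [key.2]⟩

end Aux

/-- Let `G` be a finite connected undirected graph with minimum degree at least 2
and feedback edge number `g ≥ 2` (characterized by `g = |E(G)| − |V(G)| + c`,
stated in subtraction-free form). Then `G` contains at most `3g − 3` maximal
induced paths; a maximal induced path and its reversal are counted once, by
counting the unordered pairs `{path, reversed path}` of vertex sequences. -/
theorem few_maximal_induced_paths_of_feedback_edge_number
    {V : Type*} [Fintype V] [DecidableEq V]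
    (G : SimpleGraph V) [DecidableRel G.Adj]
    (hconn : G.Connected)
    (hdeg : ∀ v : V, 2 ≤ G.degree v)
    (g : ℕ) (hg2 : 2 ≤ g)
    (hg : g + Fintype.card V = G.edgeFinset.card + Nat.card G.ConnectedComponent) :
    Set.ncard { s : Finset (List V) | ∃ a b l, IsMaxIndPath G a b l ∧
      s = {a :: (l ++ [b]), b :: (l.reverse ++ [a])} } ≤ 3 * g - 3 := by
  classical
  set S : Set (Finset (List V)) := { s : Finset (List V) | ∃ a b l, IsMaxIndPath G a b l ∧
      s = {a :: (l ++ [b]), b :: (l.reverse ++ [a])} } with hSdef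
  set fp : List V → Option V × Option V := fun L => (L.head?, L.tail.head?) with hfpdef
  set F : Finset (List V) → Finset (Option V × Option V) := fun s => s.image fp with hFdef
  set Good : List V → Prop :=
    fun L => ∃ a b l, IsMaxIndPath G a b l ∧ L = a :: (l ++ [b]) with hGooddef
  have hrevshape : ∀ (a b : V) (l : List V),
      (a :: (l ++ [b])).reverse = b :: (l.reverse ++ [a]) := by intro a b l; simp
  have hgood_rev : ∀ L, Good L → Good L.reverse := by
    rintro L ⟨a, b, l, hp, rfl⟩
    exact ⟨b, a, l.reverse, isMaxIndPath_reverse G hp, by rw [hrevshape]⟩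
  -- a good list is determined by its first two entries
  have key : ∀ L1 L2, Good L1 → Good L2 → fp L1 = fp L2 → L1 = L2 := by
    rintro L1 L2 ⟨a1, b1, l1, hp1, rfl⟩ ⟨a2, b2, l2, hp2, rfl⟩ hfp
    simp only [hfpdef, List.head?_cons, List.tail_cons, Prod.mk.injEq,
      Option.some.injEq] at hfp
    obtain ⟨rfl, hhead⟩ := hfp
    obtain ⟨hb, hl⟩ := maxIndPath_uniq G l1 l2 a1 b1 b2 hp1.1 hp1.2.1 hp2.1 hp2.2.1
      hp1.2.2.2.1 hp2.2.2.2.1 hp1.2.2.2.2 hp2.2.2.2.2 hhead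
    rw [hb, hl]
  -- characterization of elements of members of S
  have helem : ∀ s ∈ S, ∀ L ∈ s, Good L ∧ s = {L, L.reverse} := by
    rintro s ⟨a, b, l, hp, rfl⟩ L hL
    have hset : ({a :: (l ++ [b]), b :: (l.reverse ++ [a])} : Finset (List V)) =
        {a :: (l ++ [b]), (a :: (l ++ [b])).reverse} := by rw [hrevshape]
    rw [hset] at hL ⊢
    have hgA : Good (a :: (l ++ [b])) := ⟨a, b, l, hp, rfl⟩
    rcases Finset.mem_insert.mp hL with rfl | hL
    · exact ⟨hgA, rfl⟩
    · rw [Finset.mem_singleton] at hL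
      subst hL
      refine ⟨hgood_rev _ hgA, ?_⟩
      rw [List.reverse_reverse, Finset.pair_comm]
  -- distinct members of S have disjoint first-pair images
  have hdisj : ∀ s1 ∈ S, ∀ s2 ∈ S, ∀ p, p ∈ F s1 → p ∈ F s2 → s1 = s2 := by
    intro s1 hs1 s2 hs2 p hp1 hp2
    obtain ⟨L1, hL1, hfp1⟩ := Finset.mem_image.mp hp1
    obtain ⟨L2, hL2, hfp2⟩ := Finset.mem_image.mp hp2
    obtain ⟨hg1, hs1e⟩ := helem s1 hs1 L1 hL1
    obtain ⟨hg2', hs2e⟩ := helem s2 hs2 L2 hL2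
    have : L1 = L2 := key L1 L2 hg1 hg2' (by rw [hfp1, hfp2])
    rw [hs1e, hs2e, this]
  -- S is finite
  have hfin : S.Finite := by
    have himfin : (F '' S).Finite := Set.toFinite _
    refine Set.Finite.of_finite_image himfin ?_
    intro s1 hs1 s2 hs2 hF
    obtain ⟨a, b, l, hp, hse⟩ := hs1
    have hne : (F s1).Nonempty := by
      refine ⟨fp (a :: (l ++ [b])), Finset.mem_image_of_mem _ ?_⟩
      rw [hse]; exact Finset.mem_insert_self _ _
    obtain ⟨p, hp1⟩ := hne
    exact hdisj s1 ⟨a, b, l, hp, hse⟩ s2 hs2 p hp1 (hF ▸ hp1)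
  set SF : Finset (Finset (List V)) := hfin.toFinset with hSFdef
  have hmemSF : ∀ s, s ∈ SF ↔ s ∈ S := fun s => Set.Finite.mem_toFinset hfin
  rw [Set.ncard_eq_toFinset_card _ hfin]
  -- each image has exactly two elements
  have hcard2 : ∀ s ∈ SF, (F s).card = 2 := by
    intro s hs
    obtain ⟨a, b, l, hp, hse⟩ := (hmemSF s).mp hs
    have hset : s = {a :: (l ++ [b]), (a :: (l ++ [b])).reverse} := by
      rw [hse, hrevshape]
    have hab : a ≠ b := by
      have hn := hp.2.1
      rw [List.nodup_cons] at hn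
      exact fun h => hn.1 (by simp [h])
    have hfpne : fp (a :: (l ++ [b])) ≠ fp ((a :: (l ++ [b])).reverse) := by
      rw [hrevshape]
      intro h
      have h1 := congrArg Prod.fst h
      simp only [hfpdef, List.head?_cons, Option.some.injEq] at h1
      exact hab h1
    rw [hset]
    show (({a :: (l ++ [b]), (a :: (l ++ [b])).reverse} : Finset (List V)).image fp).card = 2
    rw [Finset.image_insert, Finset.image_singleton]
    exact Finset.card_pair hfpne
  -- total count of the union
  have hpairwise : ∀ s1 ∈ SF, ∀ s2 ∈ SF, s1 ≠ s2 → Disjoint (F s1) (F s2) := by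
    intro s1 hs1 s2 hs2 hne
    rw [Finset.disjoint_left]
    intro p hp1 hp2
    exact hne (hdisj s1 ((hmemSF s1).mp hs1) s2 ((hmemSF s2).mp hs2) p hp1 hp2)
  have hUcard : (SF.biUnion F).card = 2 * SF.card := by
    rw [Finset.card_biUnion hpairwise, Finset.sum_congr rfl hcard2,
      Finset.sum_const, smul_eq_mul, mul_comm]
  -- the union is contained in the set of "dart pairs" from degree ≥ 3 vertices
  set D3 : Finset G.Dart := Finset.univ.filter (fun d => 3 ≤ G.degree d.fst) with hD3def
  set T : Finset (Option V × Option V) :=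
    D3.image (fun d => (some d.fst, some d.snd)) with hTdef
  have hLT : ∀ L, Good L → fp L ∈ T := by
    rintro L ⟨a, b, l, hp, rfl⟩
    obtain ⟨c, r, hcr⟩ : ∃ c r, l ++ [b] = c :: r := by
      cases l with
      | nil => exact ⟨b, [], rfl⟩
      | cons y s => exact ⟨y, s ++ [b], rfl⟩
    have hadj : G.Adj a c := by
      have hc := hp.1
      rw [hcr] at hc
      exact hc.rel_head
    refine Finset.mem_image.mpr ⟨⟨(a, c), hadj⟩, ?_, ?_⟩
    · rw [hD3def, Finset.mem_filter]
      exact ⟨Finset.mem_univ _, hp.2.2.1⟩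
    · simp [hfpdef, hcr]
  have hsubT : SF.biUnion F ⊆ T := by
    intro p hp
    obtain ⟨s, hs, hps⟩ := Finset.mem_biUnion.mp hp
    obtain ⟨L, hL, hfpL⟩ := Finset.mem_image.mp hps
    obtain ⟨hgL, _⟩ := helem s ((hmemSF s).mp hs) L hL
    exact hfpL ▸ hLT L hgL
  -- count D3 by degrees
  set V3 : Finset V := Finset.univ.filter (fun v => 3 ≤ G.degree v) with hV3def
  have hD3card : D3.card = ∑ v ∈ V3, G.degree v := by
    rw [Finset.card_eq_sum_card_fiberwise (f := fun d => d.fst) (t := V3)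
      (fun d hd => by
        rw [hV3def, Finset.mem_coe, Finset.mem_filter]
        rw [hD3def, Finset.mem_coe, Finset.mem_filter] at hd
        exact ⟨Finset.mem_univ _, hd.2⟩)]
    refine Finset.sum_congr rfl fun v hv => ?_
    rw [← G.dart_fst_fiber_card_eq_degree v]
    congr 1
    ext d
    simp only [hD3def, Finset.mem_filter, Finset.mem_univ, true_and]
    rw [hV3def, Finset.mem_filter] at hv
    constructor
    · rintro ⟨_, h⟩; exact h
    · rintro rfl; exact ⟨hv.2, rfl⟩
  -- arithmetic
  have e1 : ∑ v, G.degree v = 2 * G.edgeFinset.card := G.sum_degrees_eq_twice_card_edges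
  have e2 : ∑ v ∈ V3, G.degree v +
      ∑ v ∈ Finset.univ.filter (fun v => ¬ 3 ≤ G.degree v), G.degree v = ∑ v, G.degree v :=
    Finset.sum_filter_add_sum_filter_not _ _ _
  have e3 : ∑ v ∈ Finset.univ.filter (fun v => ¬ 3 ≤ G.degree v), G.degree v =
      2 * (Finset.univ.filter (fun v => ¬ 3 ≤ G.degree v)).card := by
    rw [Finset.sum_congr rfl (fun v hv => ?_), Finset.sum_const, smul_eq_mul, mul_comm]
    rw [Finset.mem_filter] at hv
    have := hdeg v
    omega
  have e4 : V3.card + (Finset.univ.filter (fun v => ¬ 3 ≤ G.degree v)).card =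
      Fintype.card V := by
    rw [hV3def]
    exact Finset.card_filter_add_card_filter_not _
  have e5 : Nat.card G.ConnectedComponent = 1 := by
    haveI := hconn.preconnected.subsingleton_connectedComponent
    haveI : Nonempty G.ConnectedComponent :=
      ⟨G.connectedComponentMk hconn.nonempty.some⟩
    rw [Nat.card_eq_one_iff_unique]
    exact ⟨inferInstance, inferInstance⟩
  have e6 : 3 * V3.card ≤ ∑ v ∈ V3, G.degree v := by
    calc 3 * V3.card = ∑ _v ∈ V3, 3 := by rw [Finset.sum_const, smul_eq_mul, mul_comm]
    _ ≤ ∑ v ∈ V3, G.degree v := Finset.sum_le_sum (fun v hv => by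
        rw [hV3def, Finset.mem_filter] at hv; exact hv.2)
  have e7 : T.card ≤ D3.card := Finset.card_image_le
  have e8 : (SF.biUnion F).card ≤ T.card := Finset.card_le_card hsubT
  rw [e5] at hg
  have e9 : hfin.toFinset.card = SF.card := rfl
  omega
end

section
/- Let (U, 𝓕, ℓ) be a Set Cover instance with U a finite set, 𝓕 a nonempty finite family of subsets of U, and ℓ ∈ ℕ. Let G be the directed graph with vertex set {s, t} ∪ {v_u : u ∈ U} ∪ {v_S : S ∈ 𝓕} and arcs: ts of weight 0; for every S ∈ 𝓕, arcs s v_S and v_S t of weight 0; for every u ∈ U, an arc v_u t of weight 0; and for every S ∈ 𝓕 and every u ∈ S, an arc v_S v_u of weight 1. Then there exists a subfamily 𝓕' ⊆ 𝓕 with |𝓕'| ≤ ℓ and ⋃_{S ∈ 𝓕'} S = U if and only if there exists a strongly connected spanning subgraph H of G with cost Σ_{v ∈ V(G)} max_{vx ∈ A(H)} w(vx) at most ℓ. -/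
/-- The vertex set of the graph constructed from a Set Cover instance:
`Sum.inl (Sum.inl ())` is `s`, `Sum.inl (Sum.inr ())` is `t`,
`Sum.inr (Sum.inl u)` is `v_u` for `u ∈ U`, and `Sum.inr (Sum.inr S)` is `v_S`
for `S ∈ 𝓕`. -/
abbrev SetCoverVertex (U : Type*) (𝓕 : Finset (Finset U)) : Type _ :=
  (Unit ⊕ Unit) ⊕ (U ⊕ {S : Finset U // S ∈ 𝓕})

/-- The arcs of the graph constructed from a Set Cover instance: `ts`; `s v_S` and
`v_S t` for every `S ∈ 𝓕`; `v_u t` for every `u ∈ U`; and `v_S v_u` for every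
`S ∈ 𝓕` and `u ∈ S`. -/
def SetCoverArc {U : Type*} (𝓕 : Finset (Finset U)) :
    SetCoverVertex U 𝓕 → SetCoverVertex U 𝓕 → Prop
  | Sum.inl (Sum.inr _), Sum.inl (Sum.inl _) => True          -- t → s
  | Sum.inl (Sum.inl _), Sum.inr (Sum.inr _) => True          -- s → v_S
  | Sum.inr (Sum.inr _), Sum.inl (Sum.inr _) => True          -- v_S → t
  | Sum.inr (Sum.inl _), Sum.inl (Sum.inr _) => True          -- v_u → t
  | Sum.inr (Sum.inr S), Sum.inr (Sum.inl u) => u ∈ S.1       -- v_S → v_u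
  | _, _ => False

/-- The arc weights of the graph constructed from a Set Cover instance: the arcs
`v_S v_u` have weight 1 and all other arcs have weight 0. -/
def SetCoverWeight {U : Type*} (𝓕 : Finset (Finset U)) :
    SetCoverVertex U 𝓕 → SetCoverVertex U 𝓕 → ℕ
  | Sum.inr (Sum.inr _), Sum.inr (Sum.inl _) => 1
  | _, _ => 0


section Aux

open Relation Finset

lemma vertexCost_eq_zero {V : Type*} [Fintype V] (B : V → V → Prop)
    (w : V → V → ℕ) (v : V) (h : ∀ y, B v y → w v y = 0) :
    vertexCost B w v = 0 := by
  classical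
  refine Nat.le_zero.mp (Finset.sup_le fun y _ => ?_)
  split_ifs with hB
  · exact (h y hB).le
  · exact le_rfl

lemma le_vertexCost {V : Type*} [Fintype V] (B : V → V → Prop)
    (w : V → V → ℕ) (v y : V) (hB : B v y) : w v y ≤ vertexCost B w v := by
  classical
  unfold vertexCost
  simpa [hB] using Finset.le_sup (f := fun u => if B v u then w v u else 0)
    (Finset.mem_univ y)

lemma vertexCost_le_one {V : Type*} [Fintype V] (B : V → V → Prop)
    (w : V → V → ℕ) (v : V) (h : ∀ y, w v y ≤ 1) : vertexCost B w v ≤ 1 := by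
  classical
  refine Finset.sup_le fun y _ => ?_
  split_ifs with hB
  · exact h y
  · exact Nat.zero_le 1

variable {U : Type*} [DecidableEq U] (𝓕 : Finset (Finset U))

lemma setCoverWeight_le_one (x y : SetCoverVertex U 𝓕) :
    SetCoverWeight 𝓕 x y ≤ 1 := by
  rcases x with (x | x) | (x | x) <;> rcases y with (y | y) | (y | y) <;>
    simp [SetCoverWeight]

/-- The subgraph chosen in the forward direction: all weight-0 arcs plus the
arcs `v_{f u} → v_u`. -/
def coverB (f : U → Finset U) :
    SetCoverVertex U 𝓕 → SetCoverVertex U 𝓕 → Prop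
  | Sum.inl (Sum.inr _), Sum.inl (Sum.inl _) => True
  | Sum.inl (Sum.inl _), Sum.inr (Sum.inr _) => True
  | Sum.inr (Sum.inr _), Sum.inl (Sum.inr _) => True
  | Sum.inr (Sum.inl _), Sum.inl (Sum.inr _) => True
  | Sum.inr (Sum.inr S), Sum.inr (Sum.inl u) => S.1 = f u
  | _, _ => False

end Aux

/-- Correctness of the reduction from Set Cover to PAC: the Set Cover instance
`(U, 𝓕, ℓ)` has a set cover of size at most `ℓ` iff the constructed graph has a
strongly connected spanning subgraph of cost at most `ℓ`. -/
theorem setCover_reduction_correct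
    {U : Type*} [Fintype U] [DecidableEq U]
    (𝓕 : Finset (Finset U)) (h𝓕 : 𝓕.Nonempty) (ℓ : ℕ) :
    (∃ 𝓕' ⊆ 𝓕, 𝓕'.card ≤ ℓ ∧ ∀ u : U, ∃ S ∈ 𝓕', u ∈ S) ↔
    (∃ B : SetCoverVertex U 𝓕 → SetCoverVertex U 𝓕 → Prop,
      (∀ x y, B x y → SetCoverArc 𝓕 x y) ∧ StronglyConnected B ∧
      pacCost B (SetCoverWeight 𝓕) ≤ ℓ) := by

  classical
  constructor
  · -- forward direction
    rintro ⟨𝓕', h𝓕', hcard, hcov⟩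
    -- choice function
    have hf : ∀ u : U, ∃ S, S ∈ 𝓕' ∧ u ∈ S := by
      intro u; obtain ⟨S, hS, hu⟩ := hcov u; exact ⟨S, hS, hu⟩
    choose f hf𝓕' hfu using hf
    refine ⟨coverB 𝓕 f, ?_, ?_, ?_⟩
    · -- subgraph
      rintro ((x | x) | (x | x)) ((y | y) | (y | y)) h <;>
        simp only [coverB, SetCoverArc] at h ⊢ <;> try exact h
      rw [h]; exact hfu y
    · -- strongly connected
      obtain ⟨S₀, hS₀⟩ := h𝓕
      have step : ∀ x y, coverB 𝓕 f x y → Relation.ReflTransGen (coverB 𝓕 f) x y :=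
        fun x y h => Relation.ReflTransGen.single h
      have reach_t : ∀ x : SetCoverVertex U 𝓕,
          Relation.ReflTransGen (coverB 𝓕 f) x (Sum.inl (Sum.inr ())) := by
        rintro ((x | x) | (x | x))
        · exact (step _ _ (by trivial : coverB 𝓕 f _ (Sum.inr (Sum.inr ⟨S₀, hS₀⟩)))).trans
            (step _ _ (by trivial))
        · exact (step _ _ (by trivial : coverB 𝓕 f _ (Sum.inl (Sum.inl ())))).trans
            ((step _ _ (by trivial : coverB 𝓕 f _ (Sum.inr (Sum.inr ⟨S₀, hS₀⟩)))).trans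
              (step _ _ (by trivial)))
        · exact step _ _ (by trivial)
        · exact step _ _ (by trivial)
      have from_t : ∀ y : SetCoverVertex U 𝓕,
          Relation.ReflTransGen (coverB 𝓕 f) (Sum.inl (Sum.inr ())) y := by
        rintro ((y | y) | (y | y))
        · exact step _ _ (by trivial)
        · exact Relation.ReflTransGen.refl
        · exact (step _ _ (by trivial : coverB 𝓕 f _ (Sum.inl (Sum.inl ())))).trans
            ((step _ _ (by trivial : coverB 𝓕 f _
              (Sum.inr (Sum.inr ⟨f y, h𝓕' (hf𝓕' y)⟩)))).trans
              (step _ _ (by exact rfl : coverB 𝓕 f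
                (Sum.inr (Sum.inr ⟨f y, h𝓕' (hf𝓕' y)⟩)) (Sum.inr (Sum.inl y)))))
        · exact (step _ _ (by trivial : coverB 𝓕 f _ (Sum.inl (Sum.inl ())))).trans
            (step _ _ (by trivial))
      exact fun x y => (reach_t x).trans (from_t y)
    · -- cost bound
      have h0 : ∀ v : (Unit ⊕ Unit), vertexCost (coverB 𝓕 f) (SetCoverWeight 𝓕)
          (Sum.inl v) = 0 := by
        intro v
        refine vertexCost_eq_zero _ _ _ fun y _ => ?_
        rcases v with v | v <;> rcases y with (y | y) | (y | y) <;> rfl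
      have h0' : ∀ u : U, vertexCost (coverB 𝓕 f) (SetCoverWeight 𝓕)
          (Sum.inr (Sum.inl u)) = 0 := by
        intro u
        refine vertexCost_eq_zero _ _ _ fun y _ => ?_
        rcases y with (y | y) | (y | y) <;> rfl
      rw [pacCost, Fintype.sum_sum_type, Fintype.sum_sum_type, Fintype.sum_sum_type]
      simp only [h0, h0', Finset.sum_const_zero, zero_add]
      set 𝓕'' : Finset (Finset U) := Finset.univ.image f with h𝓕''
      have hle : ∀ S : {S : Finset U // S ∈ 𝓕},
          vertexCost (coverB 𝓕 f) (SetCoverWeight 𝓕) (Sum.inr (Sum.inr S)) ≤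
            if S.1 ∈ 𝓕'' then 1 else 0 := by
        intro S
        split_ifs with hS
        · exact vertexCost_le_one _ _ _ (setCoverWeight_le_one 𝓕 _)
        · refine Nat.le_zero.mpr (vertexCost_eq_zero _ _ _ fun y hy => ?_)
          rcases y with (y | y) | (y | y)
          · exact hy.elim
          · rfl
          · exfalso; exact hS (by rw [hy]; exact Finset.mem_image_of_mem f (Finset.mem_univ y))
          · exact hy.elim
      calc ∑ S : {S : Finset U // S ∈ 𝓕},
            vertexCost (coverB 𝓕 f) (SetCoverWeight 𝓕) (Sum.inr (Sum.inr S))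
          ≤ ∑ S : {S : Finset U // S ∈ 𝓕}, if S.1 ∈ 𝓕'' then 1 else 0 :=
            Finset.sum_le_sum fun S _ => hle S
        _ = (Finset.univ.filter (fun S : {S : Finset U // S ∈ 𝓕} => S.1 ∈ 𝓕'')).card :=
            (Finset.card_filter _ _).symm
        _ ≤ 𝓕''.card := by
            refine Finset.card_le_card_of_injOn (fun S => S.1) ?_ ?_
            · intro S hS; exact (Finset.mem_filter.mp hS).2
            · intro a _ b _ h; exact Subtype.ext h
        _ ≤ 𝓕'.card := Finset.card_le_card (by
            intro T hT
            obtain ⟨u, _, rfl⟩ := Finset.mem_image.mp hT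
            exact hf𝓕' u)
        _ ≤ ℓ := hcard
  · -- backward direction
    rintro ⟨B, hsub, hsc, hcost⟩
    set P : {S : Finset U // S ∈ 𝓕} → Prop :=
      fun S => ∃ u : U, B (Sum.inr (Sum.inr S)) (Sum.inr (Sum.inl u)) with hP
    set T : Finset {S : Finset U // S ∈ 𝓕} := Finset.univ.filter P with hT
    refine ⟨T.image Subtype.val, ?_, ?_, ?_⟩
    · intro S hS
      obtain ⟨S', _, rfl⟩ := Finset.mem_image.mp hS
      exact S'.2
    · -- card bound
      rw [Finset.card_image_of_injective _ Subtype.val_injective]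
      refine le_trans ?_ hcost
      have h1 : ∀ S ∈ T, 1 ≤ vertexCost B (SetCoverWeight 𝓕) (Sum.inr (Sum.inr S)) := by
        intro S hS
        obtain ⟨u, hu⟩ := (Finset.mem_filter.mp hS).2
        exact le_vertexCost B (SetCoverWeight 𝓕) _ (Sum.inr (Sum.inl u)) hu
      calc T.card = ∑ _S ∈ T, 1 := by simp
        _ ≤ ∑ S ∈ T, vertexCost B (SetCoverWeight 𝓕) (Sum.inr (Sum.inr S)) :=
            Finset.sum_le_sum h1
        _ ≤ ∑ S : {S : Finset U // S ∈ 𝓕},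
              vertexCost B (SetCoverWeight 𝓕) (Sum.inr (Sum.inr S)) :=
            Finset.sum_le_sum_of_subset (Finset.subset_univ T)
        _ ≤ pacCost B (SetCoverWeight 𝓕) := by
            rw [pacCost, Fintype.sum_sum_type, Fintype.sum_sum_type,
              Fintype.sum_sum_type]
            omega
    · -- cover
      intro u
      have hreach := hsc (Sum.inl (Sum.inr ())) (Sum.inr (Sum.inl u))
      rcases hreach.cases_tail with heq | ⟨c, _, hc⟩
      · exact absurd heq (by simp)
      · have harc := hsub _ _ hc
        rcases c with (c | c) | (c | c)
        · exact harc.elim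
        · exact harc.elim
        · exact harc.elim
        · exact ⟨c.1, Finset.mem_image.mpr ⟨c, Finset.mem_filter.mpr
            ⟨Finset.mem_univ c, ⟨u, hc⟩⟩, rfl⟩, harc⟩
end
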